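/- Let T be a switch tree with a source r, and let S be a one-sided convex point set with |S| = |T|. Then T admits an upward planar straight-line embedding into S such that r is mapped to the lowest point of S. -/

import Mathlib

open Finset

noncomputable section

/-- 2D cross product / determinant. -/
def det2 (u v : ℝ × ℝ) : ℝ := u.1 * v.2 - u.2 * v.1

/-- General position: pairwise distinct y-coordinates, no three collinear. -/
def GenPos (S : Finset (ℝ × ℝ)) : Prop :=
  (∀ p ∈ S, ∀ q ∈ S, p ≠ q → p.2 ≠ q.2) ∧
  (∀ p ∈ S, ∀ q ∈ S, ∀ r ∈ S, p ≠ q → p ≠ r → q ≠ r →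
    ¬ Collinear ℝ ({p, q, r} : Set (ℝ × ℝ)))

/-- Convex position: general position and no point in the convex hull of the others. -/
def ConvexPos (S : Finset (ℝ × ℝ)) : Prop :=
  GenPos S ∧ ∀ p ∈ S, p ∉ convexHull ℝ (↑(S.erase p) : Set (ℝ × ℝ))

def IsLowest (S : Finset (ℝ × ℝ)) (b : ℝ × ℝ) : Prop := b ∈ S ∧ ∀ p ∈ S, b.2 ≤ p.2

def IsHighest (S : Finset (ℝ × ℝ)) (t : ℝ × ℝ) : Prop := t ∈ S ∧ ∀ p ∈ S, p.2 ≤ t.2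

/-- One-sided convex point set: all points other than the lowest point `b` and the
highest point `t` lie strictly on one side of the line through `b` and `t`. -/
def OneSided (S : Finset (ℝ × ℝ)) : Prop :=
  ConvexPos S ∧ ∃ b t, IsLowest S b ∧ IsHighest S t ∧
    ((∀ p ∈ S, p ≠ b → p ≠ t → 0 < det2 (t - b) (p - b)) ∨
     (∀ p ∈ S, p ≠ b → p ≠ t → det2 (t - b) (p - b) < 0))

/-- Upward planar straight-line embedding of a digraph (given by its arc relation `Adj`)
into the point set `S` via the vertex placement `f`: vertices go injectively to points of
`S`, every arc goes strictly upward, and two (distinct) arcs may only meet at common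
endpoints. -/
def UPSE {V : Type*} (Adj : V → V → Prop) (S : Finset (ℝ × ℝ)) (f : V → ℝ × ℝ) : Prop :=
  Function.Injective f ∧ (∀ v, f v ∈ S) ∧
  (∀ u v, Adj u v → (f u).2 < (f v).2) ∧
  (∀ a b c d, Adj a b → Adj c d → (a, b) ≠ (c, d) →
    ∀ p, p ∈ segment ℝ (f a) (f b) → p ∈ segment ℝ (f c) (f d) →
      p ∈ ({f a, f b} : Set (ℝ × ℝ)) ∧ p ∈ ({f c, f d} : Set (ℝ × ℝ)))

/-- A directed tree: an orientation (no 2-cycles, no loops) whose underlying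
undirected graph is a tree. -/
def IsDirTree {V : Type*} (Adj : V → V → Prop) : Prop :=
  (∀ u v, Adj u v → ¬ Adj v u) ∧ (∀ v, ¬ Adj v v) ∧
  (SimpleGraph.fromRel Adj).IsTree

/-- Switch digraph: every vertex is a source or a sink. -/
def IsSwitch {V : Type*} (Adj : V → V → Prop) : Prop :=
  ∀ v, (∀ u, ¬ Adj u v) ∨ (∀ u, ¬ Adj v u)

lemma det2_smul_add (u v w : ℝ × ℝ) (a b : ℝ) :
    det2 u (a • v + b • w) = a * det2 u v + b * det2 u w := by
  simp only [det2, Prod.fst_add, Prod.snd_add, Prod.smul_fst, Prod.smul_snd, smul_eq_mul]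
  ring

lemma det2_smul (u v : ℝ × ℝ) (a : ℝ) : det2 u (a • v) = a * det2 u v := by
  simp only [det2, Prod.smul_fst, Prod.smul_snd, smul_eq_mul]
  ring

lemma det2_self (u : ℝ × ℝ) : det2 u u = 0 := by simp only [det2]; ring

lemma det2_swap (u v : ℝ × ℝ) : det2 u v = - det2 v u := by simp only [det2]; ring

lemma det2_base (a b c : ℝ × ℝ) : det2 (b - a) (c - a) = - det2 (b - c) (a - c) := by
  simp only [det2, Prod.fst_sub, Prod.snd_sub]; ring

lemma collinear_of_det2 {A B C : ℝ × ℝ} (hAB : A ≠ B) (h : det2 (B - A) (C - A) = 0) :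
    Collinear ℝ ({A, B, C} : Set (ℝ × ℝ)) := by
  rw [collinear_iff_of_mem (Set.mem_insert A {B, C})]
  refine ⟨B - A, ?_⟩
  have hd : (B.1 - A.1) * (C.2 - A.2) - (B.2 - A.2) * (C.1 - A.1) = 0 := by
    simpa [det2, Prod.fst_sub, Prod.snd_sub] using h
  intro p hp
  rcases hp with hp | hp | hp
  · exact ⟨0, by rw [hp]; simp⟩
  · exact ⟨1, by rw [hp]; simp⟩
  · subst hp
    by_cases h1 : B.1 - A.1 ≠ 0
    · refine ⟨(p.1 - A.1) / (B.1 - A.1), ?_⟩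
      show p = _ • (B - A) + A
      apply Prod.ext
      · simp only [Prod.fst_add, Prod.smul_fst, Prod.fst_sub, smul_eq_mul]
        field_simp
        ring
      · simp only [Prod.snd_add, Prod.smul_snd, Prod.snd_sub, smul_eq_mul]
        field_simp
        nlinarith [hd]
    · push_neg at h1
      have h2 : B.2 - A.2 ≠ 0 := by
        intro h2
        apply hAB
        apply Prod.ext <;> linarith
      refine ⟨(p.2 - A.2) / (B.2 - A.2), ?_⟩
      show p = _ • (B - A) + A
      have h3 : p.1 - A.1 = 0 := by
        rw [h1] at hd
        simp only [zero_mul, zero_sub, neg_eq_zero, mul_eq_zero] at hd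
        tauto
      apply Prod.ext
      · simp only [Prod.fst_add, Prod.smul_fst, Prod.fst_sub, smul_eq_mul, h1]
        linarith
      · simp only [Prod.snd_add, Prod.smul_snd, Prod.snd_sub, smul_eq_mul]
        field_simp
        ring

/-- two segments sharing endpoint q, with non-collinear other ends, meet only at q -/
lemma seg_shared {q u v x : ℝ × ℝ} (hdet : det2 (u - q) (v - q) ≠ 0)
    (hx1 : x ∈ segment ℝ q u) (hx2 : x ∈ segment ℝ q v) : x = q := by
  rw [segment_eq_image'] at hx1 hx2
  obtain ⟨s, hs, hxs⟩ := hx1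
  obtain ⟨t, ht, hxt⟩ := hx2
  dsimp only at hxs hxt
  have h1 : s • (u - q) = t • (v - q) := add_left_cancel (hxs.trans hxt.symm)
  have h2 : s * det2 (u - q) (u - q) = t * det2 (u - q) (v - q) := by
    rw [← det2_smul, ← det2_smul, h1]
  rw [det2_self, mul_zero] at h2
  have ht0 : t = 0 := by
    rcases mul_eq_zero.mp h2.symm with h | h
    · exact h
    · exact absurd h hdet
  rw [← hxt, ht0, zero_smul, add_zero]

/-- a segment whose endpoints are strictly on the same side of the line AB avoids [A,B] -/
lemma seg_disjoint {A B C D x : ℝ × ℝ} {σ : ℝ}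
    (hC : 0 < σ * det2 (B - A) (C - A)) (hD : 0 < σ * det2 (B - A) (D - A))
    (hx1 : x ∈ segment ℝ A B) (hx2 : x ∈ segment ℝ C D) : False := by
  obtain ⟨s, t, hs, ht, hst, hx⟩ := hx2
  have hxA : x - A = s • (C - A) + t • (D - A) := by
    rw [← hx]
    have : s + t = 1 := hst
    match_scalars <;> nlinarith [this]
  have hpos : 0 < σ * det2 (B - A) (x - A) := by
    rw [hxA, det2_smul_add]
    rcases eq_or_lt_of_le hs with h | h
    · rcases eq_or_lt_of_le ht with h' | h'
      · exfalso; rw [← h, ← h'] at hst; simpa using hst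
      · nlinarith
    · nlinarith
  obtain ⟨s', t', hs', ht', hst', hx'⟩ := hx1
  have hxA' : x - A = t' • (B - A) := by
    rw [← hx']
    have : s' + t' = 1 := hst'
    match_scalars <;> nlinarith [this]
  rw [hxA', det2_smul, det2_self, mul_zero, mul_zero] at hpos
  exact lt_irrefl 0 hpos

/-- membership in a horizontal segment from x-coordinates -/
lemma mem_segment_horiz {P Q R : ℝ × ℝ} (h1 : P.2 = Q.2) (h2 : Q.2 = R.2)
    (hx : Q.1 ∈ segment ℝ P.1 R.1) : Q ∈ segment ℝ P R := by
  obtain ⟨s, t, hs, ht, hst, hx⟩ := hx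
  refine ⟨s, t, hs, ht, hst, ?_⟩
  apply Prod.ext
  · simpa using hx
  · simp only [Prod.snd_add, Prod.smul_snd, smul_eq_mul]
    rw [← h2, ← h1, ← add_mul, hst, one_mul]

def Cross (a b c d : ℕ) : Prop := a < c ∧ c < b ∧ b < d
def NC (a b c d : ℕ) : Prop := ¬ Cross a b c d ∧ ¬ Cross c d a b

def GoodMap {V : Type} (Adj : V → V → Prop) (n : ℕ) (g : V → ℕ) : Prop :=
  Function.Injective g ∧ (∀ v, g v < n) ∧ (∀ u v, Adj u v → g u < g v) ∧
  (∀ a b c d, Adj a b → Adj c d → NC (g a) (g b) (g c) (g d))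

def SourceStmt (n : ℕ) : Prop := ∀ (V : Type) (_ : Fintype V) (Adj : V → V → Prop),
  Fintype.card V = n → IsDirTree Adj → IsSwitch Adj →
  ∀ r : V, (∀ u, ¬ Adj u r) → ∃ g, GoodMap Adj n g ∧ g r = 0

def SinkStmt (n : ℕ) : Prop := ∀ (V : Type) (_ : Fintype V) (Adj : V → V → Prop),
  Fintype.card V = n → IsDirTree Adj → IsSwitch Adj →
  ∀ r : V, (∀ u, ¬ Adj r u) → ∃ g, GoodMap Adj n g ∧ g r = n - 1

lemma fromRel_flip {V : Type} (Adj : V → V → Prop) :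
    SimpleGraph.fromRel (fun u v => Adj v u) = SimpleGraph.fromRel Adj := by
  ext u v
  simp only [SimpleGraph.fromRel_adj]
  tauto

lemma sink_of_source (n : ℕ) (h : SourceStmt n) : SinkStmt n := by
  intro V instV Adj hcard hT hsw r hr
  obtain ⟨g', ⟨hinj, hlt, hup, hnc⟩, hg'r⟩ :=
    h V instV (fun u v => Adj v u) hcard
      ⟨fun u v huv => hT.1 v u huv, hT.2.1, by rw [fromRel_flip]; exact hT.2.2⟩
      (fun v => (hsw v).elim (fun h' => Or.inr h') (fun h' => Or.inl h')) r hr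
  refine ⟨fun v => n - 1 - g' v, ⟨?_, ?_, ?_, ?_⟩, ?_⟩
  · intro u v huv
    dsimp only at huv
    have := hlt u; have := hlt v
    exact hinj (by omega)
  · intro v; dsimp only
    have := hlt v
    omega
  · intro u v huv
    dsimp only
    have h1 := hup v u huv
    have := hlt u; have := hlt v
    omega
  · intro a b c d hab hcd
    dsimp only
    have h1 := hnc d c b a hcd hab
    have l1 := hlt a; have l2 := hlt b; have l3 := hlt c; have l4 := hlt d
    have u1 := hup b a hab; have u2 := hup d c hcd
    unfold NC Cross at h1 ⊢
    omega
  · dsimp only; rw [hg'r]; omega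

lemma source_all : ∀ n, SourceStmt n := by
  intro n
  induction n using Nat.strong_induction_on with
  | _ n IH =>
  intro V instV Adj hcard hT hsw r hr
  classical
  obtain ⟨hno2, hloop, htree⟩ := hT
  have hn1 : 1 ≤ n := hcard ▸ Fintype.card_pos_iff.mpr ⟨r⟩
  set G := SimpleGraph.fromRel Adj with hG
  let W := {v : V // v ≠ r}
  let G' : SimpleGraph W := G.comap (Subtype.val)
  let κ : W → G'.ConnectedComponent := G'.connectedComponentMk
  -- every component contains a neighbour of r
  have walk_to_nbr : ∀ (x y : V) (wk : G.Walk x y), y = r → ∀ hx : x ≠ r,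
      ∃ c : W, Adj r c.val ∧ κ ⟨x, hx⟩ = κ c := by
    intro x y wk
    induction wk with
    | nil => intro hy hx; exact absurd (hy ▸ rfl) hx
    | @cons u v _ h p ih =>
      intro hy hu
      by_cases hv : v = r
      · rw [hv] at h
        have hadj : Adj r u := by
          rw [hG, SimpleGraph.fromRel_adj] at h
          rcases h.2 with h' | h'
          · exact absurd h' (hr u)
          · exact h'
        exact ⟨⟨u, hu⟩, hadj, rfl⟩
      · obtain ⟨c, hc1, hc2⟩ := ih hy hv
        have hadj' : G'.Adj ⟨u, hu⟩ ⟨v, hv⟩ := h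
        exact ⟨c, hc1,
          (SimpleGraph.ConnectedComponent.connectedComponentMk_eq_of_adj hadj').trans hc2⟩
  have exists_nbr : ∀ K : G'.ConnectedComponent, ∃ c : W, Adj r c.val ∧ κ c = K := by
    intro K
    induction K using SimpleGraph.ConnectedComponent.ind with
    | _ w =>
      obtain ⟨wk⟩ := htree.isConnected.preconnected w.val r
      obtain ⟨c, hc1, hc2⟩ := walk_to_nbr w.val r wk rfl w.prop
      exact ⟨c, hc1, hc2.symm⟩
  -- the neighbour in each component is unique
  have nbr_unique : ∀ c c' : W, Adj r c.val → Adj r c'.val → κ c = κ c' → c = c' := by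
    intro c c' h1 h2 hcc
    by_contra hne
    obtain ⟨wk'⟩ := SimpleGraph.ConnectedComponent.exact hcc
    let pth : G'.Path c c' := wk'.toPath
    let φ : G' →g G := ⟨Subtype.val, fun {a b} hab => hab⟩
    have hφinj : Function.Injective φ := Subtype.val_injective
    have hp1 : (pth.val.map φ).IsPath :=
      SimpleGraph.Walk.map_isPath_of_injective hφinj pth.prop
    have hr1 : r ∉ (pth.val.map φ).support := by
      rw [SimpleGraph.Walk.support_map]
      intro hmem
      obtain ⟨w, _, hw⟩ := List.mem_map.mp hmem
      exact w.prop hw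
    have hadj1 : G.Adj c.val r := by
      rw [hG, SimpleGraph.fromRel_adj]
      exact ⟨c.prop, Or.inr h1⟩
    have hadj2 : G.Adj r c'.val := by
      rw [hG, SimpleGraph.fromRel_adj]
      exact ⟨fun h => c'.prop h.symm, Or.inl h2⟩
    let p2 : G.Walk c.val c'.val := .cons hadj1 (.cons hadj2 .nil)
    have hp2 : p2.IsPath := by
      simp only [p2, SimpleGraph.Walk.isPath_def, SimpleGraph.Walk.support_cons,
        SimpleGraph.Walk.support_nil]
      refine List.nodup_cons.mpr ⟨?_, List.nodup_cons.mpr ⟨?_, List.nodup_singleton _⟩⟩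
      · intro hmem
        rcases List.mem_cons.mp hmem with h | h
        · exact c.prop h
        · exact hne (Subtype.ext (List.mem_singleton.mp h))
      · intro hmem
        exact c'.prop (List.mem_singleton.mp hmem).symm
    have heq := htree.IsAcyclic.path_unique
      (⟨pth.val.map φ, hp1⟩ : G.Path c.val c'.val) ⟨p2, hp2⟩
    have hsupp : r ∈ (pth.val.map φ).support := by
      rw [show (pth.val.map φ) = p2 from congrArg Subtype.val heq]
      simp [p2]
    exact hr1 hsupp
  -- sizes and offsets
  letI : Fintype G'.ConnectedComponent := Fintype.ofFinite _
  let m : G'.ConnectedComponent → ℕ := fun K => (univ.filter fun w : W => κ w = K).card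
  let e : G'.ConnectedComponent → ℕ := fun K => ((Fintype.equivFin G'.ConnectedComponent) K).val
  have he : Function.Injective e :=
    fun a b h => (Fintype.equivFin G'.ConnectedComponent).injective (Fin.val_injective h)
  let off : G'.ConnectedComponent → ℕ :=
    fun K => 1 + ∑ J ∈ univ.filter (fun J => e J < e K), m J
  have hcardW : Fintype.card W = n - 1 := by
    have h1 : Fintype.card {v : V // ¬ (v = r)} = Fintype.card V - Fintype.card {v : V // v = r} :=
      Fintype.card_subtype_compl _
    rw [Fintype.card_subtype_eq, hcard] at h1
    exact h1
  have hsum : ∑ K, m K = n - 1 := by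
    rw [← hcardW, ← Finset.card_univ]
    exact (Finset.card_eq_sum_card_fiberwise (f := κ) (t := univ) (fun x _ => mem_univ (κ x))).symm
  have hoff_le : ∀ K K', e K < e K' → off K + m K ≤ off K' := by
    intro K K' hKK'
    have hnotmem : K ∉ univ.filter (fun J => e J < e K) := by simp
    have hins : insert K (univ.filter (fun J => e J < e K)) ⊆ univ.filter (fun J => e J < e K') := by
      intro J hJ
      rcases Finset.mem_insert.mp hJ with h | h
      · subst h; simp only [mem_filter, mem_univ, true_and]; exact hKK'
      · simp only [mem_filter, mem_univ, true_and] at h ⊢; omega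
    have h1 := Finset.sum_le_sum_of_subset (f := m) hins
    rw [Finset.sum_insert hnotmem] at h1
    simp only [off]
    omega
  have hoff_top : ∀ K, off K + m K ≤ n := by
    intro K
    have hnotmem : K ∉ univ.filter (fun J => e J < e K) := by simp
    have h1 := Finset.sum_le_sum_of_subset (f := m)
      (Finset.subset_univ (insert K (univ.filter (fun J => e J < e K))))
    rw [Finset.sum_insert hnotmem, hsum] at h1
    simp only [off]
    omega
  have hoff1 : ∀ K, 1 ≤ off K := fun K => Nat.le_add_right 1 _
  have hdisj : ∀ K K', K ≠ K' → off K + m K ≤ off K' ∨ off K' + m K' ≤ off K := by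
    intro K K' hne
    rcases lt_or_gt_of_ne (fun h : e K = e K' => hne (he h)) with h | h
    · exact Or.inl (hoff_le K K' h)
    · exact Or.inr (hoff_le K' K h)
  have hm1 : ∀ w : W, 1 ≤ m (κ w) := by
    intro w
    refine Finset.card_pos.mpr ⟨w, ?_⟩
    simp
  -- recursive embedding of each component
  have hrec : ∀ K : G'.ConnectedComponent, ∃ gg : {w : W // κ w = K} → ℕ,
      Function.Injective gg ∧ (∀ x, gg x < m K) ∧
      (∀ x y, Adj x.val.val y.val.val → gg x < gg y) ∧
      (∀ a b c d, Adj a.val.val b.val.val → Adj c.val.val d.val.val →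
        NC (gg a) (gg b) (gg c) (gg d)) ∧
      (∀ x, Adj r x.val.val → gg x = m K - 1) := by
    intro K
    obtain ⟨c0, hc0adj, hc0K⟩ := exists_nbr K
    let VK := {w : W // κ w = K}
    let AdjK : VK → VK → Prop := fun x y => Adj x.val.val y.val.val
    have hcardVK : Fintype.card VK = m K :=
      Fintype.card_of_subtype (univ.filter fun w : W => κ w = K) (by intro x; simp)
    have hmKn : m K < n := by
      have h1 : m K ≤ Fintype.card W := by
        rw [← Finset.card_univ]; exact Finset.card_filter_le _ _
      omega
    let GK := SimpleGraph.fromRel AdjK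
    have hGKadj : ∀ x y : VK, GK.Adj x y ↔ G'.Adj x.val y.val := by
      intro x y
      rw [SimpleGraph.fromRel_adj]
      constructor
      · rintro ⟨hne, h⟩
        show G.Adj x.val.val y.val.val
        rw [hG, SimpleGraph.fromRel_adj]
        exact ⟨fun hh => hne (Subtype.ext (Subtype.ext hh)), h⟩
      · intro h
        have h' : G.Adj x.val.val y.val.val := h
        rw [hG, SimpleGraph.fromRel_adj] at h'
        exact ⟨fun hh => h'.1 (by rw [hh]), h'.2⟩
    have hφinj : Function.Injective (fun x : VK => x.val.val) :=
      fun a b h => Subtype.ext (Subtype.ext h)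
    have hacyc : GK.IsAcyclic := by
      intro v c hc
      let φK : GK →g G := ⟨fun x => x.val.val, fun {a b} hab => ((hGKadj a b).1 hab : G'.Adj a.val b.val)⟩
      exact htree.IsAcyclic (c.map φK)
        ((SimpleGraph.Walk.map_isCycle_iff_of_injective hφinj).mpr hc)
    have hlift : ∀ (a b : W) (wkk : G'.Walk a b) (ha : κ a = K) (hb : κ b = K),
        GK.Reachable ⟨a, ha⟩ ⟨b, hb⟩ := by
      intro a b wkk
      induction wkk with
      | nil => intro ha hb; exact SimpleGraph.Reachable.refl _
      | @cons a c' _ h p ih =>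
        intro ha hb
        have hc' : κ c' = K :=
          (SimpleGraph.ConnectedComponent.connectedComponentMk_eq_of_adj h).symm.trans ha
        exact (SimpleGraph.Adj.reachable
          ((hGKadj ⟨a, ha⟩ ⟨c', hc'⟩).mpr h)).trans (ih hc' hb)
    have hconn : GK.Connected := by
      haveI : Nonempty VK := ⟨⟨c0, hc0K⟩⟩
      refine ⟨?_⟩
      intro x y
      obtain ⟨wk⟩ : G'.Reachable x.val y.val :=
        SimpleGraph.ConnectedComponent.exact (x.prop.trans y.prop.symm)
      have h := hlift x.val y.val wk x.prop y.prop
      simpa using h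
    obtain ⟨gg0, ⟨hi, hlt, hup, hnc⟩, hroot⟩ :=
      sink_of_source (m K) (IH (m K) hmKn) VK _ AdjK hcardVK
        ⟨fun u v h => hno2 _ _ h, fun v => hloop _, ⟨hconn, hacyc⟩⟩
        (fun v => (hsw v.val.val).imp (fun h u => h _) (fun h u => h _))
        ⟨c0, hc0K⟩
        (by intro u
            rcases hsw c0.val with h | h
            · exact absurd hc0adj (h r)
            · exact h _)
    refine ⟨gg0, hi, hlt, hup, hnc, ?_⟩
    intro x hx
    have hxc : x.val = c0 := nbr_unique x.val c0 hx hc0adj (x.prop.trans hc0K.symm)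
    rw [show x = (⟨c0, hc0K⟩ : VK) from Subtype.ext hxc]
    exact hroot
  choose gg hgi hglt hgup hgnc hgnb using hrec
  have hcast : ∀ (K : G'.ConnectedComponent) (w : W) (hw : κ w = K),
      gg (κ w) ⟨w, rfl⟩ = gg K ⟨w, hw⟩ := by
    intro K w hw
    subst hw
    rfl
  let g : V → ℕ := fun v => if h : v = r then 0 else off (κ ⟨v, h⟩) + gg (κ ⟨v, h⟩) ⟨⟨v, h⟩, rfl⟩
  have hg_r : g r = 0 := dif_pos rfl
  have hgval : ∀ (v : V) (h : v ≠ r), g v = off (κ ⟨v, h⟩) + gg (κ ⟨v, h⟩) ⟨⟨v, h⟩, rfl⟩ :=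
    fun v h => dif_neg h
  have hglo : ∀ (v : V) (h : v ≠ r), off (κ ⟨v, h⟩) ≤ g v := by
    intro v h; rw [hgval v h]; exact Nat.le_add_right _ _
  have hghi : ∀ (v : V) (h : v ≠ r), g v < off (κ ⟨v, h⟩) + m (κ ⟨v, h⟩) := by
    intro v h; rw [hgval v h]
    exact Nat.add_lt_add_left (hglt _ _) _
  have harc : ∀ u v (huv : Adj u v) (hu : u ≠ r) (hv : v ≠ r), κ ⟨u, hu⟩ = κ ⟨v, hv⟩ := by
    intro u v huv hu hv
    have hne : u ≠ v := fun h => hloop v (h ▸ huv)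
    have : G'.Adj ⟨u, hu⟩ ⟨v, hv⟩ := by
      show G.Adj u v
      rw [hG, SimpleGraph.fromRel_adj]
      exact ⟨hne, Or.inl huv⟩
    exact SimpleGraph.ConnectedComponent.connectedComponentMk_eq_of_adj this
  have hv_ne : ∀ u v, Adj u v → v ≠ r := fun u v huv h => hr u (h ▸ huv)
  have htopval : ∀ (v : V) (hv : v ≠ r), Adj r v → g v = off (κ ⟨v, hv⟩) + (m (κ ⟨v, hv⟩) - 1) := by
    intro v hv hadj
    rw [hgval v hv, hgnb (κ ⟨v, hv⟩) ⟨⟨v, hv⟩, rfl⟩ hadj]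
  -- comparison within one component
  have hsame : ∀ (u v : V) (hu : u ≠ r) (hv : v ≠ r) (hK : κ ⟨u, hu⟩ = κ ⟨v, hv⟩),
      g v = off (κ ⟨v, hv⟩) + gg (κ ⟨u, hu⟩) ⟨⟨v, hv⟩, hK.symm⟩ := by
    intro u v hu hv hK
    rw [hgval v hv, hcast (κ ⟨u, hu⟩) ⟨v, hv⟩ hK.symm]
  refine ⟨g, ⟨?_, ?_, ?_, ?_⟩, hg_r⟩
  · -- injective
    intro u v huv
    by_cases hu : u = r <;> by_cases hv : v = r
    · rw [hu, hv]
    · rw [hu, hg_r] at huv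
      have := hglo v hv; have := hoff1 (κ ⟨v, hv⟩)
      omega
    · rw [hv, hg_r] at huv
      have := hglo u hu; have := hoff1 (κ ⟨u, hu⟩)
      omega
    · by_cases hK : κ ⟨u, hu⟩ = κ ⟨v, hv⟩
      · rw [hgval u hu, hsame u v hu hv hK] at huv
        have hoffeq : off (κ ⟨u, hu⟩) = off (κ ⟨v, hv⟩) := congrArg off hK
        have hggeq : gg (κ ⟨u, hu⟩) ⟨⟨u, hu⟩, rfl⟩ = gg (κ ⟨u, hu⟩) ⟨⟨v, hv⟩, hK.symm⟩ := by
          omega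
        have h2 := hgi (κ ⟨u, hu⟩) hggeq
        exact congrArg (fun x => (Subtype.val (Subtype.val x) : V)) h2
      · rcases hdisj (κ ⟨u, hu⟩) (κ ⟨v, hv⟩) hK with h | h
        · have := hglo u hu; have := hghi u hu; have := hglo v hv; have := hghi v hv
          omega
        · have := hglo u hu; have := hghi u hu; have := hglo v hv; have := hghi v hv
          omega
  · -- bounded
    intro v
    by_cases h : v = r
    · rw [h, hg_r]; omega
    · have := hghi v h; have := hoff_top (κ ⟨v, h⟩)
      omega
  · -- upward
    intro u v huv
    have hv : v ≠ r := hv_ne u v huv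
    by_cases hu : u = r
    · rw [hu, hg_r]
      have := hglo v hv; have := hoff1 (κ ⟨v, hv⟩)
      omega
    · have hK := harc u v huv hu hv
      rw [hgval u hu, hsame u v hu hv hK]
      have hoffeq : off (κ ⟨u, hu⟩) = off (κ ⟨v, hv⟩) := congrArg off hK
      have := hgup (κ ⟨u, hu⟩) ⟨⟨u, hu⟩, rfl⟩ ⟨⟨v, hv⟩, hK.symm⟩ huv
      omega
  · -- non-crossing
    intro a b c d hab hcd
    have hb : b ≠ r := hv_ne a b hab
    have hd : d ≠ r := hv_ne c d hcd
    by_cases hA : a = r <;> by_cases hC : c = r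
    · subst hA; subst hC
      rw [hg_r]
      unfold NC Cross
      omega
    · subst hA
      rw [hg_r]
      have hKb := htopval b hb hab
      have hKcd := harc c d hcd hC hd
      have h1 := hglo c hC; have h2 := hghi c hC
      have h3 := hglo d hd; have h4 := hghi d hd
      have h5 := hm1 ⟨b, hb⟩
      have h6 := hoff1 (κ ⟨b, hb⟩)
      have hoffcd : off (κ ⟨c, hC⟩) = off (κ ⟨d, hd⟩) := congrArg off hKcd
      have hmcd : m (κ ⟨c, hC⟩) = m (κ ⟨d, hd⟩) := congrArg m hKcd
      by_cases hKK : κ ⟨b, hb⟩ = κ ⟨c, hC⟩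
      · have hoffeq : off (κ ⟨b, hb⟩) = off (κ ⟨c, hC⟩) := congrArg off hKK
        have hmeq : m (κ ⟨b, hb⟩) = m (κ ⟨c, hC⟩) := congrArg m hKK
        unfold NC Cross
        omega
      · rcases hdisj _ _ hKK with h | h <;> · unfold NC Cross; omega
    · subst hC
      rw [hg_r]
      have hKd := htopval d hd hcd
      have hKab := harc a b hab hA hb
      have h1 := hglo a hA; have h2 := hghi a hA
      have h3 := hglo b hb; have h4 := hghi b hb
      have h5 := hm1 ⟨d, hd⟩
      have h6 := hoff1 (κ ⟨d, hd⟩)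
      have hoffab : off (κ ⟨a, hA⟩) = off (κ ⟨b, hb⟩) := congrArg off hKab
      have hmab : m (κ ⟨a, hA⟩) = m (κ ⟨b, hb⟩) := congrArg m hKab
      by_cases hKK : κ ⟨d, hd⟩ = κ ⟨a, hA⟩
      · have hoffeq : off (κ ⟨d, hd⟩) = off (κ ⟨a, hA⟩) := congrArg off hKK
        have hmeq : m (κ ⟨d, hd⟩) = m (κ ⟨a, hA⟩) := congrArg m hKK
        unfold NC Cross
        omega
      · rcases hdisj _ _ hKK with h | h <;> · unfold NC Cross; omega
    · have hKab := harc a b hab hA hb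
      have hKcd := harc c d hcd hC hd
      by_cases hKK : κ ⟨a, hA⟩ = κ ⟨c, hC⟩
      · have hKad : κ ⟨a, hA⟩ = κ ⟨d, hd⟩ := hKK.trans hKcd
        have e1 : g a = off (κ ⟨a, hA⟩) + gg (κ ⟨a, hA⟩) ⟨⟨a, hA⟩, rfl⟩ := hgval a hA
        have e2 := hsame a b hA hb hKab
        have e3 := hsame a c hA hC hKK
        have e4 := hsame a d hA hd hKad
        have hncc := hgnc (κ ⟨a, hA⟩) ⟨⟨a, hA⟩, rfl⟩ ⟨⟨b, hb⟩, hKab.symm⟩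
          ⟨⟨c, hC⟩, hKK.symm⟩ ⟨⟨d, hd⟩, hKad.symm⟩ hab hcd
        have o1 : off (κ ⟨a, hA⟩) = off (κ ⟨b, hb⟩) := congrArg off hKab
        have o2 : off (κ ⟨a, hA⟩) = off (κ ⟨c, hC⟩) := congrArg off hKK
        have o3 : off (κ ⟨a, hA⟩) = off (κ ⟨d, hd⟩) := congrArg off hKad
        unfold NC Cross at hncc ⊢
        omega
      · have h1 := hglo a hA; have h2 := hghi a hA
        have h3 := hglo b hb; have h4 := hghi b hb
        have h5 := hglo c hC; have h6 := hghi c hC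
        have h7 := hglo d hd; have h8 := hghi d hd
        have hoffab : off (κ ⟨a, hA⟩) = off (κ ⟨b, hb⟩) := congrArg off hKab
        have hmab : m (κ ⟨a, hA⟩) = m (κ ⟨b, hb⟩) := congrArg m hKab
        have hoffcd : off (κ ⟨c, hC⟩) = off (κ ⟨d, hd⟩) := congrArg off hKcd
        have hmcd : m (κ ⟨c, hC⟩) = m (κ ⟨d, hd⟩) := congrArg m hKcd
        rcases hdisj _ _ hKK with h | h <;> · unfold NC Cross; omega

lemma chain {S : Finset (ℝ × ℝ)} (hS : ConvexPos S) {b t : ℝ × ℝ}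
    (hb : IsLowest S b) (ht : IsHighest S t) {σ : ℝ} (hσ : σ = 1 ∨ σ = -1)
    (hside : ∀ q ∈ S, q ≠ b → q ≠ t → 0 < σ * det2 (t - b) (q - b))
    {P1 P2 P3 : ℝ × ℝ} (h1 : P1 ∈ S) (h2 : P2 ∈ S) (h3 : P3 ∈ S)
    (hy12 : P1.2 < P2.2) (hy23 : P2.2 < P3.2) :
    0 < σ * det2 (P3 - P1) (P2 - P1) := by
  have hP12 : P1 ≠ P2 := fun h => absurd (congrArg Prod.snd h) (ne_of_lt hy12)
  have hP23 : P2 ≠ P3 := fun h => absurd (congrArg Prod.snd h) (ne_of_lt hy23)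
  have hP13 : P1 ≠ P3 := fun h => absurd (congrArg Prod.snd h) (ne_of_lt (hy12.trans hy23))
  have hbP1 : b.2 ≤ P1.2 := hb.2 P1 h1
  have hP3t : P3.2 ≤ t.2 := ht.2 P3 h3
  have hP2b : P2 ≠ b := fun h => by rw [h] at hy12; linarith
  have hP2t : P2 ≠ t := fun h => by rw [h] at hy23; linarith
  have hbt2 : b.2 < t.2 := by linarith
  by_contra hcon
  push_neg at hcon
  have hne0 : det2 (P3 - P1) (P2 - P1) ≠ 0 := by
    intro h0
    exact hS.1.2 P1 h1 P3 h3 P2 h2 hP13 hP12 hP23.symm (collinear_of_det2 hP13 h0)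
  have hlt : σ * det2 (P3 - P1) (P2 - P1) < 0 := by
    rcases eq_or_lt_of_le hcon with h | h
    · exfalso
      rcases hσ with rfl | rfl
      · rw [one_mul] at h; exact hne0 h
      · apply hne0; linarith [h]
    · exact h
  -- the two horizontal crossing points
  set c1 : ℝ := (P2.2 - P1.2) / (P3.2 - P1.2) with hc1
  set c2 : ℝ := (P2.2 - b.2) / (t.2 - b.2) with hc2
  set M : ℝ × ℝ := P1 + c1 • (P3 - P1) with hM
  set Q : ℝ × ℝ := b + c2 • (t - b) with hQ
  have hd31 : (0:ℝ) < P3.2 - P1.2 := by linarith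
  have hdtb : (0:ℝ) < t.2 - b.2 := by linarith
  have hc1mem : c1 ∈ Set.Icc (0:ℝ) 1 := by
    constructor
    · apply div_nonneg <;> linarith
    · rw [div_le_one hd31]; linarith
  have hc2mem : c2 ∈ Set.Icc (0:ℝ) 1 := by
    constructor
    · apply div_nonneg <;> linarith
    · rw [div_le_one hdtb]; linarith
  have hMseg : M ∈ segment ℝ P1 P3 := by
    rw [segment_eq_image']
    exact ⟨c1, hc1mem, rfl⟩
  have hQseg : Q ∈ segment ℝ b t := by
    rw [segment_eq_image']
    exact ⟨c2, hc2mem, rfl⟩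
  have hM2 : M.2 = P2.2 := by
    simp only [hM, Prod.snd_add, Prod.smul_snd, Prod.snd_sub, smul_eq_mul, hc1]
    field_simp
    ring
  have hQ2 : Q.2 = P2.2 := by
    simp only [hQ, Prod.snd_add, Prod.smul_snd, Prod.snd_sub, smul_eq_mul, hc2]
    field_simp
    ring
  -- x-coordinate comparisons
  have hdM : det2 (P3 - P1) (P2 - M) = det2 (P3 - P1) (P2 - P1) := by
    have : P2 - M = (1:ℝ) • (P2 - P1) + (-c1) • (P3 - P1) := by
      rw [hM]; module
    rw [this, det2_smul_add, det2_self]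
    ring
  have hdM' : det2 (P3 - P1) (P2 - M) = -((P3.2 - P1.2) * (P2.1 - M.1)) := by
    simp only [det2, Prod.fst_sub, Prod.snd_sub]
    rw [hM2]
    ring
  have hmx : 0 < σ * (P2.1 - M.1) := by
    have h0 : σ * -((P3.2 - P1.2) * (P2.1 - M.1)) < 0 := by
      rw [← hdM', hdM]; exact hlt
    nlinarith [h0, hd31]
  have hdQ : det2 (t - b) (P2 - Q) = det2 (t - b) (P2 - b) := by
    have : P2 - Q = (1:ℝ) • (P2 - b) + (-c2) • (t - b) := by
      rw [hQ]; module
    rw [this, det2_smul_add, det2_self]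
    ring
  have hdQ' : det2 (t - b) (P2 - Q) = -((t.2 - b.2) * (P2.1 - Q.1)) := by
    simp only [det2, Prod.fst_sub, Prod.snd_sub]
    rw [hQ2]
    ring
  have hqx : 0 < σ * (Q.1 - P2.1) := by
    have h0 : 0 < σ * -((t.2 - b.2) * (P2.1 - Q.1)) := by
      rw [← hdQ', hdQ]; exact hside P2 h2 hP2b hP2t
    nlinarith [h0, hdtb]
  -- P2 lies on the segment [M, Q]
  have hP2seg : P2 ∈ segment ℝ M Q := by
    apply mem_segment_horiz hM2 hQ2.symm
    rcases hσ with rfl | rfl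
    · rw [one_mul] at hmx hqx
      rw [segment_eq_Icc (by linarith : M.1 ≤ Q.1)]
      constructor <;> linarith
    · rw [segment_symm, segment_eq_Icc (by nlinarith : Q.1 ≤ M.1)]
      constructor <;> nlinarith
  -- contradiction with convex position
  have hhull : P2 ∈ convexHull ℝ (↑(S.erase P2) : Set (ℝ × ℝ)) := by
    have hsub : ({P1, P3, b, t} : Set (ℝ × ℝ)) ⊆ ↑(S.erase P2) := by
      intro z hz
      simp only [Finset.coe_erase, Set.mem_diff, Finset.mem_coe, Set.mem_singleton_iff]
      rcases hz with rfl | rfl | rfl | rfl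
      · exact ⟨h1, hP12⟩
      · exact ⟨h3, hP23.symm⟩
      · exact ⟨hb.1, fun h => hP2b h.symm⟩
      · exact ⟨ht.1, fun h => hP2t h.symm⟩
    apply convexHull_mono hsub
    have hMh : M ∈ convexHull ℝ ({P1, P3, b, t} : Set (ℝ × ℝ)) := by
      apply (convex_convexHull ℝ _).segment_subset
        (subset_convexHull ℝ _ (by simp)) (subset_convexHull ℝ _ (by simp)) hMseg
    have hQh : Q ∈ convexHull ℝ ({P1, P3, b, t} : Set (ℝ × ℝ)) := by
      apply (convex_convexHull ℝ _).segment_subset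
        (subset_convexHull ℝ _ (by simp)) (subset_convexHull ℝ _ (by simp)) hQseg
    exact (convex_convexHull ℝ _).segment_subset hMh hQh hP2seg
  exact hS.2 P2 h2 hhull

lemma chain_out {S : Finset (ℝ × ℝ)} (hS : ConvexPos S) {b t : ℝ × ℝ}
    (hb : IsLowest S b) (ht : IsHighest S t) {σ : ℝ} (hσ : σ = 1 ∨ σ = -1)
    (hside : ∀ q ∈ S, q ≠ b → q ≠ t → 0 < σ * det2 (t - b) (q - b))
    {P1 P2 P3 : ℝ × ℝ} (h1 : P1 ∈ S) (h2 : P2 ∈ S) (h3 : P3 ∈ S)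
    (hik : P1.2 < P3.2) (hout : P2.2 < P1.2 ∨ P3.2 < P2.2) :
    σ * det2 (P3 - P1) (P2 - P1) < 0 := by
  rcases hout with hlt | hlt
  · have hpos := chain hS hb ht hσ hside h2 h1 h3 hlt hik
    rw [det2_base P1 P3 P2]
    nlinarith [hpos]
  · have hpos := chain hS hb ht hσ hside h1 h3 h2 hik hlt
    rw [det2_swap]
    nlinarith [hpos]

lemma exists_enum {S : Finset (ℝ × ℝ)} (hgen : GenPos S) {n : ℕ} (hn : S.card = n) :
    ∃ p : Fin n → ℝ × ℝ, Function.Injective p ∧ (∀ i, p i ∈ S) ∧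
      (∀ i j : Fin n, i < j → (p i).2 < (p j).2) ∧
      (∀ (b : ℝ × ℝ), IsLowest S b → ∀ h0 : 0 < n, p ⟨0, h0⟩ = b) := by
  classical
  have hinj2 : Set.InjOn Prod.snd (S : Set (ℝ × ℝ)) := by
    intro a ha b hb h
    by_contra hne
    exact hgen.1 a ha b hb hne h
  set Y := S.image Prod.snd with hY
  have hYc : Y.card = n := by
    rw [hY, Finset.card_image_of_injOn hinj2, hn]
  set eY := Y.orderIsoOfFin hYc with heY
  have hexu : ∀ i : Fin n, ∃! q, q ∈ S ∧ q.2 = (eY i : ℝ) := by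
    intro i
    obtain ⟨q, hq, hq2⟩ := Finset.mem_image.mp (eY i).2
    exact ⟨q, ⟨hq, hq2⟩, fun q' hq' => hinj2 hq'.1 hq (by rw [hq'.2, hq2])⟩
  set p : Fin n → ℝ × ℝ := fun i => Finset.choose _ S (hexu i) with hp
  have hmem : ∀ i, p i ∈ S := fun i => Finset.choose_mem _ _ _
  have hsnd : ∀ i, (p i).2 = (eY i : ℝ) := fun i => (Finset.choose_property _ _ (hexu i))
  have hmono : ∀ i j : Fin n, i < j → (p i).2 < (p j).2 := by
    intro i j hij
    rw [hsnd i, hsnd j]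
    exact_mod_cast eY.strictMono hij
  refine ⟨p, ?_, hmem, hmono, ?_⟩
  · intro i j h
    by_contra hne
    rcases lt_or_gt_of_ne hne with h' | h'
    · exact absurd (congrArg Prod.snd h) (ne_of_lt (hmono i j h'))
    · exact absurd (congrArg Prod.snd h) (ne_of_gt (hmono j i h'))
  · intro b hb h0
    have hbY : b.2 ∈ Y := Finset.mem_image_of_mem _ hb.1
    set k := eY.symm ⟨b.2, hbY⟩ with hk
    have h1 : (p ⟨0, h0⟩).2 ≤ b.2 := by
      rw [hsnd]
      have : eY ⟨0, h0⟩ ≤ eY k := eY.monotone (by rw [Fin.le_def]; exact Nat.zero_le _)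
      have h2 : (eY k : ℝ) = b.2 := by rw [hk]; simp
      calc (eY ⟨0, h0⟩ : ℝ) ≤ (eY k : ℝ) := by exact_mod_cast this
        _ = b.2 := h2
    have h2 : b.2 ≤ (p ⟨0, h0⟩).2 := hb.2 _ (hmem _)
    exact (hinj2 (hmem _) hb.1 (le_antisymm h1 h2)).symm ▸ rfl


theorem switch_tree_UPSE_one_sided_source {V : Type} [Fintype V] (Adj : V → V → Prop)
    (hT : IsDirTree Adj) (hsw : IsSwitch Adj)
    (r : V) (hr : ∀ u, ¬ Adj u r)
    (S : Finset (ℝ × ℝ)) (hS : OneSided S) (hcard : S.card = Fintype.card V)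
    (b : ℝ × ℝ) (hb : IsLowest S b) :
    ∃ f : V → ℝ × ℝ, UPSE Adj S f ∧ f r = b := by
  classical
  obtain ⟨hconv, b', t, hb', ht', hsides⟩ := hS
  have hbb' : b = b' := by
    have h1 : b.2 ≤ b'.2 := hb.2 b' hb'.1
    have h2 : b'.2 ≤ b.2 := hb'.2 b hb.1
    by_contra hne
    exact hconv.1.1 b hb.1 b' hb'.1 hne (le_antisymm h1 h2)
  subst hbb'
  obtain ⟨σ, hσ, hside⟩ : ∃ σ : ℝ, (σ = 1 ∨ σ = -1) ∧
      ∀ q ∈ S, q ≠ b → q ≠ t → 0 < σ * det2 (t - b) (q - b) := by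
    rcases hsides with h | h
    · exact ⟨1, Or.inl rfl, fun q hq h1 h2 => by rw [one_mul]; exact h q hq h1 h2⟩
    · exact ⟨-1, Or.inr rfl, fun q hq h1 h2 => by have := h q hq h1 h2; linarith⟩
  set n := Fintype.card V with hn
  obtain ⟨p, hpinj, hpmem, hpmono, hplow⟩ := exists_enum hconv.1 hcard
  obtain ⟨g, ⟨hginj, hglt, hgup, hgnc⟩, hgr⟩ := source_all n V _ Adj rfl hT hsw r hr
  have hn0 : 0 < n := Fintype.card_pos_iff.mpr ⟨r⟩
  let idx : V → Fin n := fun v => ⟨g v, hglt v⟩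
  let f : V → ℝ × ℝ := fun v => p (idx v)
  have hfr : f r = b := by
    have h1 : idx r = ⟨0, hn0⟩ := Fin.ext hgr
    show p (idx r) = b
    rw [h1]
    exact hplow b hb hn0
  have hidxlt : ∀ u v, g u < g v → idx u < idx v := fun u v h => Fin.mk_lt_mk.mpr h
  have hidxne : ∀ u v : V, g u ≠ g v → idx u ≠ idx v :=
    fun u v h hh => h (congrArg Fin.val hh)
  have hfinj : Function.Injective f := by
    intro u v h
    exact hginj (congrArg Fin.val (hpinj h))
  have hylt : ∀ u v : V, g u < g v → (f u).2 < (f v).2 :=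
    fun u v h => hpmono _ _ (hidxlt u v h)
  have hncol : ∀ u v w : V, g u ≠ g v → g u ≠ g w → g v ≠ g w →
      det2 (f v - f u) (f w - f u) ≠ 0 := by
    intro u v w huv huw hvw h0
    have hpij : p (idx u) ≠ p (idx v) := fun h => hidxne u v huv (hpinj h)
    exact hconv.1.2 (p (idx u)) (hpmem _) (p (idx v)) (hpmem _) (p (idx w)) (hpmem _)
      hpij (fun h => hidxne u w huw (hpinj h)) (fun h => hidxne v w hvw (hpinj h))
      (collinear_of_det2 hpij h0)
  refine ⟨f, ⟨hfinj, fun v => hpmem _, fun u v huv => hylt u v (hgup u v huv), ?_⟩, hfr⟩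
  intro va vb vc vd hab hcd hnepair x hx1 hx2
  obtain ⟨hcr1, hcr2⟩ := hgnc va vb vc vd hab hcd
  unfold Cross at hcr1 hcr2
  have hij1 : g va < g vb := hgup _ _ hab
  have hij2 : g vc < g vd := hgup _ _ hcd
  by_cases hii : g va = g vc
  · by_cases hjj : g vb = g vd
    · exact absurd (by rw [hginj hii, hginj hjj] : (va, vb) = (vc, vd)) hnepair
    · -- shared bottom endpoint
      have hfeq : f vc = f va := congrArg p (Fin.ext hii.symm)
      rw [hfeq] at hx2
      have hxq : x = f va :=
        seg_shared (hncol va vb vd (by omega) (by omega) hjj) hx1 hx2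
      constructor
      · rw [hxq]; exact Set.mem_insert _ _
      · rw [hxq, ← hfeq]; exact Set.mem_insert _ _
  · by_cases hbc : g vb = g vc
    · -- top of arc 1 = bottom of arc 2
      have hfeq : f vc = f vb := congrArg p (Fin.ext hbc.symm)
      rw [hfeq] at hx2
      rw [segment_symm] at hx1
      have hxq : x = f vb :=
        seg_shared (hncol vb va vd (by omega) (by omega) (by omega)) hx1 hx2
      constructor
      · rw [hxq]; exact Set.mem_insert_iff.mpr (Or.inr rfl)
      · rw [hxq, ← hfeq]; exact Set.mem_insert _ _
    · by_cases had : g va = g vd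
      · -- bottom of arc 1 = top of arc 2
        have hfeq : f vd = f va := congrArg p (Fin.ext had.symm)
        rw [hfeq, segment_symm] at hx2
        have hxq : x = f va :=
          seg_shared (hncol va vb vc (by omega) hii (by omega)) hx1 hx2
        constructor
        · rw [hxq]; exact Set.mem_insert _ _
        · rw [hxq, ← hfeq]; exact Set.mem_insert_iff.mpr (Or.inr rfl)
      · by_cases hjj : g vb = g vd
        · -- shared top endpoint
          have hfeq : f vd = f vb := congrArg p (Fin.ext hjj.symm)
          rw [hfeq, segment_symm] at hx2
          rw [segment_symm] at hx1
          have hxq : x = f vb :=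
            seg_shared (hncol vb va vc (by omega) (by omega) hii) hx1 hx2
          constructor
          · rw [hxq]; exact Set.mem_insert_iff.mpr (Or.inr rfl)
          · rw [hxq, ← hfeq]; exact Set.mem_insert_iff.mpr (Or.inr rfl)
        · -- all four indices distinct
          exfalso
          rcases lt_or_gt_of_ne hii with h12 | h12
          · rcases lt_or_gt_of_ne (fun h : g vb = g vc => hbc h) with hbc' | hbc'
            · have hC : σ * det2 (f vb - f va) (f vc - f va) < 0 :=
                chain_out hconv hb ht' hσ hside (hpmem _) (hpmem _) (hpmem _)
                  (hylt va vb hij1) (Or.inr (hylt vb vc hbc'))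
              have hD : σ * det2 (f vb - f va) (f vd - f va) < 0 :=
                chain_out hconv hb ht' hσ hside (hpmem _) (hpmem _) (hpmem _)
                  (hylt va vb hij1) (Or.inr (hylt vb vd (by omega)))
              exact seg_disjoint (σ := -σ) (by nlinarith) (by nlinarith) hx1 hx2
            · have hdb : g vd < g vb := by omega
              have hC : 0 < σ * det2 (f vb - f va) (f vc - f va) :=
                chain hconv hb ht' hσ hside (hpmem _) (hpmem _) (hpmem _)
                  (hylt va vc h12) (hylt vc vb hbc')
              have hD : 0 < σ * det2 (f vb - f va) (f vd - f va) :=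
                chain hconv hb ht' hσ hside (hpmem _) (hpmem _) (hpmem _)
                  (hylt va vd (by omega)) (hylt vd vb hdb)
              exact seg_disjoint hC hD hx1 hx2
          · rcases lt_or_gt_of_ne (fun h : g vd = g va => had h.symm) with hda | hda
            · have hC : σ * det2 (f vd - f vc) (f va - f vc) < 0 :=
                chain_out hconv hb ht' hσ hside (hpmem _) (hpmem _) (hpmem _)
                  (hylt vc vd hij2) (Or.inr (hylt vd va hda))
              have hD : σ * det2 (f vd - f vc) (f vb - f vc) < 0 :=
                chain_out hconv hb ht' hσ hside (hpmem _) (hpmem _) (hpmem _)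
                  (hylt vc vd hij2) (Or.inr (hylt vd vb (by omega)))
              exact seg_disjoint (σ := -σ) (by nlinarith) (by nlinarith) hx2 hx1
            · have hbd : g vb < g vd := by omega
              have hC : 0 < σ * det2 (f vd - f vc) (f va - f vc) :=
                chain hconv hb ht' hσ hside (hpmem _) (hpmem _) (hpmem _)
                  (hylt vc va h12) (hylt va vd hda)
              have hD : 0 < σ * det2 (f vd - f vc) (f vb - f vc) :=
                chain hconv hb ht' hσ hside (hpmem _) (hpmem _) (hpmem _)
                  (hylt vc vb (by omega)) (hylt vb vd hbd)
              exact seg_disjoint hC hD hx2 hx1
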